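/- Given coideal comonad data (D⁺, δ⁺) with δ⁺ : D⁺ → D⁺ ∘ D satisfying D⁺ε ∘ δ⁺ = id and D⁺δ ∘ δ⁺ = δ⁺D ∘ δ⁺, the data D X = X × D⁺ X, ε = fst, δ = ⟨id, δ⁺ ∘ snd⟩ form a comonad on Set. -/

import Mathlib

/-- The comonad carrier induced by coideal comonad data: `D X = X × D⁺ X`. -/
def Dc (F : Type → Type) (X : Type) : Type := X × F X

/-- Functorial action of `D`, given that of `D⁺`. -/
def dmap (F : Type → Type) (Fmap : ∀ {X Y : Type}, (X → Y) → F X → F Y)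
    {X Y : Type} (f : X → Y) : Dc F X → Dc F Y :=
  fun x => (f x.1, Fmap f x.2)

/-- Counit: `ε = fst`. -/
def deps (F : Type → Type) {X : Type} : Dc F X → X := Prod.fst

/-- Comultiplication: `δ = ⟨id, δ⁺ ∘ snd⟩`. -/
def ddel (F : Type → Type) (delp : ∀ X : Type, F X → F (Dc F X)) {X : Type} :
    Dc F X → Dc F (Dc F X) :=
  fun x => (x, delp X x.2)

/-- Given coideal comonad data `(D⁺, δ⁺)` — a functor `D⁺` with
`δ⁺ : D⁺ → D⁺ ∘ D` satisfying `D⁺ε ∘ δ⁺ = id` and `D⁺δ ∘ δ⁺ = δ⁺D ∘ δ⁺` —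
the data `D X = X × D⁺ X`, `ε = fst`, `δ = ⟨id, δ⁺ ∘ snd⟩` form a comonad
on Set. -/
theorem coideal_data_gives_comonad (F : Type → Type)
    (Fmap : ∀ {X Y : Type}, (X → Y) → F X → F Y)
    (Fmap_id : ∀ X : Type, Fmap (id : X → X) = id)
    (Fmap_comp : ∀ (X Y Z : Type) (f : X → Y) (g : Y → Z),
      Fmap (g ∘ f) = Fmap g ∘ Fmap f)
    (delp : ∀ X : Type, F X → F (Dc F X))
    (coideal1 : ∀ (X : Type) (d : F X), Fmap (deps F (X := X)) (delp X d) = d)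
    (coideal2 : ∀ (X : Type) (d : F X),
      Fmap (ddel F delp (X := X)) (delp X d) = delp (Dc F X) (delp X d)) :
    (∀ (X : Type) (x : Dc F X), dmap F Fmap (deps F (X := X)) (ddel F delp x) = x) ∧
    (∀ (X : Type) (x : Dc F X), deps F (ddel F delp x) = x) ∧
    (∀ (X : Type) (x : Dc F X),
      dmap F Fmap (ddel F delp (X := X)) (ddel F delp x) = ddel F delp (ddel F delp x)) := by
  refine ⟨fun X x => ?_, fun X x => rfl, fun X x => ?_⟩
  · exact Prod.ext rfl (coideal1 X x.2)
  · simp [dmap, ddel, coideal2]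
    rfl
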